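/- If R₀,…,R_t and S₀,…,S_t are all strictly positive, then S_t ≤ B³·R_t^{−2}, where B = ‖λ*‖₁; equivalently, the quantity R_t²·S_t never exceeds B³ along the AdaBoost trajectory as long as these quantities remain positive. -/

import Mathlib

/-- The exponential loss `L(λ) = (1/m) ∑ᵢ exp(−(Mλ)ᵢ)`. -/
noncomputable def expLoss {m N : ℕ} (M : Matrix (Fin m) (Fin N) ℝ) (lam : Fin N → ℝ) : ℝ :=
  (1 / (m : ℝ)) * ∑ i, Real.exp (-(M.mulVec lam i))

/-- AdaBoost's distribution `D(i) ∝ exp(−(Mλ)ᵢ)`. -/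
noncomputable def wt {m N : ℕ} (M : Matrix (Fin m) (Fin N) ℝ) (lam : Fin N → ℝ) (i : Fin m) : ℝ :=
  Real.exp (-(M.mulVec lam i)) / ∑ i', Real.exp (-(M.mulVec lam i'))

/-- The ℓ₁-norm on `ℝ^N`. -/
noncomputable def l1 {N : ℕ} (v : Fin N → ℝ) : ℝ := ∑ j, |v j|

/-- `lam`, `j`, `r` describe a run of AdaBoost on feature matrix `M`:
`lam 0 = 0`, and at each round the coordinate `j t` of maximal absolute correlation is
chosen, `r t` is its correlation, and the step is `α_t = ½ ln((1+r_t)/(1−r_t))`. -/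
def IsAdaBoost {m N : ℕ} (M : Matrix (Fin m) (Fin N) ℝ)
    (lam : ℕ → Fin N → ℝ) (j : ℕ → Fin N) (r : ℕ → ℝ) : Prop :=
  lam 0 = 0 ∧
  ∀ t : ℕ,
    (∀ j' : Fin N, |∑ i, wt M (lam t) i * M i j'| ≤ |∑ i, wt M (lam t) i * M i (j t)|) ∧
    r t = ∑ i, wt M (lam t) i * M i (j t) ∧
    lam (t + 1) = lam t + Pi.single (j t) ((1 / 2) * Real.log ((1 + r t) / (1 - r t)))


/-- The logarithmic suboptimality `R(λ) = ln L(λ) − ln L(λ*)` relative to a reference `λ*`. -/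
noncomputable def Rlog {m N : ℕ} (M : Matrix (Fin m) (Fin N) ℝ)
    (lamStar lam : Fin N → ℝ) : ℝ :=
  Real.log (expLoss M lam) - Real.log (expLoss M lamStar)

/-- The ℓ₁-distance `S(λ) = inf {‖μ − λ‖₁ : L(μ) ≤ L(λ*)}` from `λ` to the set of
combinations achieving the target loss. -/
noncomputable def Sdist {m N : ℕ} (M : Matrix (Fin m) (Fin N) ℝ)
    (lamStar lam : Fin N → ℝ) : ℝ :=
  sInf {d : ℝ | ∃ μ : Fin N → ℝ, expLoss M μ ≤ expLoss M lamStar ∧ d = l1 (μ - lam)}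



/-! ### Auxiliary lemmas -/


lemma two_log_le {s : ℝ} (hs : 1 ≤ s) : 2 * Real.log s ≤ s - 1/s := by
  have hs0 : 0 < s := lt_of_lt_of_le one_pos hs
  set a : ℝ := (s - 1/s)/2 with ha
  have hinv : 1/s ≤ 1 := by rw [div_le_one hs0]; exact hs
  have ha0 : 0 ≤ a := by
    have : 1/s ≤ s := hinv.trans hs
    rw [ha]; linarith
  have h1 : s ≤ 1 + a + a^2/2 := by
    have key : 1 + a + a^2/2 - s = (s-1)^4/(8*s^2) := by
      rw [ha]; field_simp; ring
    nlinarith [div_nonneg (pow_nonneg (sub_nonneg.2 hs) 4) (by positivity : (0:ℝ) ≤ 8*s^2)]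
  have h2 : 1 + a + a^2/2 ≤ Real.exp a := by
    have := Real.quadratic_le_exp_of_nonneg ha0
    linarith
  have h3 : Real.log s ≤ a := by
    have := Real.log_le_log hs0 (h1.trans h2)
    rwa [Real.log_exp] at this
  rw [ha] at h3; linarith

lemma artanh_le {x : ℝ} (h0 : 0 ≤ x) (h1 : x < 1) :
    Real.log ((1+x)/(1-x)) ≤ 2*x/(1-x^2) := by
  have hm : (0:ℝ) < 1 - x := by linarith
  have hp : (0:ℝ) < 1 + x := by linarith
  have hq : (0:ℝ) < 1 - x^2 := by nlinarith
  set q : ℝ := Real.sqrt (1-x^2) with hqdef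
  have hqpos : 0 < q := Real.sqrt_pos.2 hq
  have hq2 : q^2 = 1-x^2 := Real.sq_sqrt hq.le
  set s : ℝ := Real.sqrt ((1+x)/(1-x)) with hsdef
  have hfrac1 : (1:ℝ) ≤ (1+x)/(1-x) := by rw [le_div_iff₀ hm]; linarith
  have hs1 : 1 ≤ s := by
    have h := Real.sqrt_le_sqrt hfrac1
    rwa [Real.sqrt_one] at h
  have hs0 : 0 < s := lt_of_lt_of_le one_pos hs1
  have hsq : s^2 = (1+x)/(1-x) := Real.sq_sqrt (by positivity)
  have hlog : Real.log ((1+x)/(1-x)) = 2 * Real.log s := by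
    rw [← hsq, Real.log_pow]; push_cast; ring
  have h2 := two_log_le hs1
  have hx2 : s * q = 1 + x := by
    rw [hsdef, hqdef, ← Real.sqrt_mul (by positivity)]
    rw [show (1+x)/(1-x) * (1-x^2) = (1+x)^2 by field_simp; ring]
    exact Real.sqrt_sq hp.le
  have hs_eq : s = (1+x)/q := by rw [eq_div_iff hqpos.ne']; exact hx2
  have hsub : s - 1/s = 2*x/q := by
    rw [hs_eq]
    rw [one_div_div]
    rw [div_sub_div _ _ hqpos.ne' hp.ne']
    rw [show (1+x)*(1+x) - q*q = 2*x*(1+x) by nlinarith [hq2]]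
    rw [mul_comm q (1+x), ← div_div, mul_div_assoc, div_self hp.ne', mul_one]
  have hqle : q ≤ 1 := by
    rw [hqdef]
    exact Real.sqrt_le_one.2 (by nlinarith)
  have hgeq : 1 - x^2 ≤ q := by
    have h := Real.sqrt_le_sqrt (show (1-x^2)^2 ≤ 1-x^2 by nlinarith)
    rwa [Real.sqrt_sq hq.le, ← hqdef] at h
  have hlast : 2*x/q ≤ 2*x/(1-x^2) :=
    div_le_div_of_nonneg_left (by linarith) hq hgeq
  calc Real.log ((1+x)/(1-x)) = 2*Real.log s := hlog
    _ ≤ s - 1/s := h2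
    _ = 2*x/q := hsub
    _ ≤ 2*x/(1-x^2) := hlast

/-- `δ * artanh δ ≤ -½ log(1-δ²) * 2`, in expanded form. -/
lemma key_log {d : ℝ} (h0 : 0 ≤ d) (h1 : d < 1) :
    (2+d) * Real.log (1+d) + (2-d) * Real.log (1-d) ≤ 0 := by
  set F : ℝ → ℝ := fun x => (2+x) * Real.log (1+x) + (2-x) * Real.log (1-x) with hF
  have hderiv : ∀ x ∈ Set.Ico (0:ℝ) 1, HasDerivAt F
      (Real.log (1+x) - Real.log (1-x) + ((2+x)/(1+x) - (2-x)/(1-x))) x := by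
    intro x hx
    obtain ⟨hx0, hx1⟩ := hx
    have hp : (0:ℝ) < 1 + x := by linarith
    have hm : (0:ℝ) < 1 - x := by linarith
    have H1 : HasDerivAt (fun y : ℝ => Real.log (1+y)) (1+x)⁻¹ x := by
      have := ((hasDerivAt_id x).const_add 1).log hp.ne'
      simpa using this
    have H2 : HasDerivAt (fun y : ℝ => Real.log (1-y)) (-1/(1-x)) x := by
      have := ((hasDerivAt_id x).const_sub 1).log hm.ne'
      simpa using this
    have HA : HasDerivAt (fun y : ℝ => (2+y) * Real.log (1+y))
        (Real.log (1+x) + (2+x) * (1+x)⁻¹) x := by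
      have := ((hasDerivAt_id x).const_add 2).mul H1
      exact this.congr_deriv (by simp only [id_eq]; ring)
    have HB : HasDerivAt (fun y : ℝ => (2-y) * Real.log (1-y))
        (-Real.log (1-x) + (2-x) * (-1/(1-x))) x := by
      have := ((hasDerivAt_id x).const_sub 2).mul H2
      exact this.congr_deriv (by simp only [id_eq]; ring)
    have := HA.add HB
    refine this.congr_deriv ?_
    field_simp
    ring
  have hanti : AntitoneOn F (Set.Ico (0:ℝ) 1) := by
    apply antitoneOn_of_deriv_nonpos (convex_Ico 0 1)
    · exact fun x hx => (hderiv x hx).continuousAt.continuousWithinAt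
    · intro x hx
      rw [interior_Ico] at hx
      exact (hderiv x ⟨le_of_lt hx.1, hx.2⟩).differentiableAt.differentiableWithinAt
    · intro x hx
      rw [interior_Ico] at hx
      obtain ⟨hx0, hx1⟩ := hx
      have hp : (0:ℝ) < 1 + x := by linarith
      have hm : (0:ℝ) < 1 - x := by linarith
      have hq : (0:ℝ) < 1 - x^2 := by nlinarith
      rw [(hderiv x ⟨le_of_lt hx0, hx1⟩).deriv]
      have e1 : Real.log (1+x) - Real.log (1-x) = Real.log ((1+x)/(1-x)) :=
        (Real.log_div hp.ne' hm.ne').symm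
      have e2 : (2+x)/(1+x) - (2-x)/(1-x) = -(2*x/(1-x^2)) := by
        field_simp
        ring
      rw [e1, e2]
      have := artanh_le (le_of_lt hx0) hx1
      linarith
  have := hanti (Set.mem_Ico.2 ⟨le_refl 0, one_pos⟩) (Set.mem_Ico.2 ⟨h0, h1⟩) h0
  simp only [hF] at this
  simpa using this

lemma key_step {B R S R' S' d : ℝ} (hd0 : 0 < d) (hd1 : d < 1)
    (hR : 0 < R) (hRS : R ≤ d * S)
    (hInd : R^2 * S ≤ B^3)
    (hR'0 : 0 < R') (hR' : R' ≤ R + (1/2) * Real.log (1 - d^2))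
    (hS'0 : 0 ≤ S') (hS' : S' ≤ S + (1/2) * Real.log ((1+d)/(1-d))) :
    R'^2 * S' ≤ B^3 := by
  have hp : (0:ℝ) < 1 + d := by linarith
  have hm : (0:ℝ) < 1 - d := by linarith
  have hq : (0:ℝ) < 1 - d^2 := by nlinarith
  obtain ⟨c, hc⟩ : ∃ c:ℝ, c = -((1/2) * Real.log (1 - d^2)) := ⟨_, rfl⟩
  obtain ⟨α, hα⟩ : ∃ a:ℝ, a = (1/2) * Real.log ((1+d)/(1-d)) := ⟨_, rfl⟩
  rw [← hα] at hS'
  have hsplit : Real.log (1 - d^2) = Real.log (1+d) + Real.log (1-d) := by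
    rw [show (1:ℝ) - d^2 = (1+d)*(1-d) by ring, Real.log_mul hp.ne' hm.ne']
  have hαdef : Real.log ((1+d)/(1-d)) = Real.log (1+d) - Real.log (1-d) :=
    Real.log_div hp.ne' hm.ne'
  have hc0 : 0 < c := by
    rw [hc]
    have : Real.log (1-d^2) < 0 := Real.log_neg hq (by nlinarith)
    linarith
  have hα0 : 0 ≤ α := by
    rw [hα, hαdef]
    have := Real.log_le_log hm (show 1-d ≤ 1+d by linarith)
    linarith
  have hkey : d * α ≤ 2 * c := by
    have h := key_log hd0.le hd1
    rw [hα, hαdef, hc, hsplit]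
    nlinarith [h]
  have hRc : R' ≤ R - c := by rw [hc]; linarith
  have hcR : c < R := by linarith
  have hS0 : 0 < S := by nlinarith
  have h1 : R'^2 * S' ≤ (R-c)^2 * (S+α) := by
    have hsq : R'^2 ≤ (R-c)^2 := by nlinarith
    exact mul_le_mul hsq hS' hS'0 (sq_nonneg _)
  have t1 : (0:ℝ) ≤ (d*S - R)*(c*(2*R-c)) := by
    apply mul_nonneg (by linarith)
    apply mul_nonneg hc0.le (by linarith)
  have t2 : (0:ℝ) ≤ (2*c - d*α)*(R-c)^2 := mul_nonneg (by linarith) (sq_nonneg _)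
  have t3 : (0:ℝ) ≤ c^2*(3*R-2*c) := mul_nonneg (sq_nonneg _) (by linarith)
  have expand : d*(R^2*S - (R-c)^2*(S+α))
      = (d*S - R)*(c*(2*R-c)) + (2*c - d*α)*(R-c)^2 + c^2*(3*R-2*c) := by ring
  have hX : 0 ≤ d*(R^2*S - (R-c)^2*(S+α)) := by rw [expand]; linarith
  have h2 : (R-c)^2 * (S+α) ≤ R^2 * S := by nlinarith [hX, hd0]
  calc R'^2 * S' ≤ (R-c)^2*(S+α) := h1
    _ ≤ R^2*S := h2
    _ ≤ B^3 := hInd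


lemma l1_neg {N : ℕ} (v : Fin N → ℝ) : l1 (-v) = l1 v := by
  rw [l1, l1]
  apply Finset.sum_congr rfl
  intro i _
  rw [Pi.neg_apply, abs_neg]

section helpers

variable {m N : ℕ} (M : Matrix (Fin m) (Fin N) ℝ)

lemma l1_nonneg (v : Fin N → ℝ) : 0 ≤ l1 v :=
  Finset.sum_nonneg fun _ _ => abs_nonneg _

lemma l1_add_le (u v : Fin N → ℝ) : l1 (u + v) ≤ l1 u + l1 v := by
  rw [l1, l1, l1, ← Finset.sum_add_distrib]
  exact Finset.sum_le_sum fun i _ => abs_add_le _ _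

lemma l1_single (j0 : Fin N) (a : ℝ) : l1 (Pi.single j0 a) = |a| := by
  rw [l1]
  rw [Finset.sum_eq_single j0]
  · simp
  · intro b _ hb; simp [Pi.single_eq_of_ne hb]
  · simp

lemma expLoss_pos (hm : 0 < m) (v : Fin N → ℝ) : 0 < expLoss M v := by
  have : Nonempty (Fin m) := Fin.pos_iff_nonempty.1 hm
  apply mul_pos
  · have : (0:ℝ) < m := Nat.cast_pos.2 hm
    positivity
  · exact Finset.sum_pos (fun i _ => Real.exp_pos _) Finset.univ_nonempty

lemma mulVec_abs_le (hM : ∀ i j, |M i j| ≤ 1) (v : Fin N → ℝ) (i : Fin m) :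
    |M.mulVec v i| ≤ l1 v := by
  rw [Matrix.mulVec, dotProduct]
  calc |∑ j, M i j * v j| ≤ ∑ j, |M i j * v j| := Finset.abs_sum_le_sum_abs _ _
    _ ≤ ∑ j, |v j| := by
        apply Finset.sum_le_sum
        intro j _
        rw [abs_mul]
        calc |M i j| * |v j| ≤ 1 * |v j| :=
              mul_le_mul_of_nonneg_right (hM i j) (abs_nonneg _)
          _ = |v j| := one_mul _
    _ = l1 v := rfl

lemma expLoss_ge (hm : 0 < m) (hM : ∀ i j, |M i j| ≤ 1) (v : Fin N → ℝ) :
    Real.exp (-(l1 v)) ≤ expLoss M v := by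
  have hmR : (0:ℝ) < m := Nat.cast_pos.2 hm
  have h : ∀ i : Fin m, Real.exp (-(l1 v)) ≤ Real.exp (-(M.mulVec v i)) := by
    intro i
    apply Real.exp_le_exp.2
    have := abs_le.1 (mulVec_abs_le M hM v i)
    linarith [this.2]
  calc Real.exp (-(l1 v)) = (1/(m:ℝ)) * (m * Real.exp (-(l1 v))) := by field_simp
    _ ≤ expLoss M v := by
        rw [expLoss]
        apply mul_le_mul_of_nonneg_left _ (by positivity)
        calc (m:ℝ) * Real.exp (-(l1 v)) = ∑ _i : Fin m, Real.exp (-(l1 v)) := by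
              rw [Finset.sum_const, Finset.card_univ, Fintype.card_fin, nsmul_eq_mul]
          _ ≤ ∑ i, Real.exp (-(M.mulVec v i)) := Finset.sum_le_sum fun i _ => h i

lemma expLoss_zero (hm : 0 < m) : expLoss M 0 = 1 := by
  have hmR : (0:ℝ) < m := Nat.cast_pos.2 hm
  rw [expLoss]
  simp [Matrix.mulVec_zero]
  field_simp

lemma edge_bound (hm : 0 < m) (lam mu : Fin N → ℝ) (δ : ℝ)
    (hδ : ∀ j' : Fin N, |∑ i, wt M lam i * M i j'| ≤ δ) :
    Real.log (expLoss M lam) - Real.log (expLoss M mu) ≤ δ * l1 (mu - lam) := by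
  have hne : Nonempty (Fin m) := Fin.pos_iff_nonempty.1 hm
  have hmR : (0:ℝ) < m := Nat.cast_pos.2 hm
  have hZ : 0 < ∑ i', Real.exp (-(M.mulVec lam i')) :=
    Finset.sum_pos (fun i _ => Real.exp_pos _) Finset.univ_nonempty
  have hw0 : ∀ i, 0 ≤ wt M lam i := fun i => div_nonneg (Real.exp_pos _).le hZ.le
  have hw1 : ∑ i, wt M lam i = 1 := by
    rw [show (fun i => wt M lam i) = fun i => Real.exp (-(M.mulVec lam i)) / ∑ i', Real.exp (-(M.mulVec lam i')) from rfl]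
    rw [← Finset.sum_div]
    exact div_self hZ.ne'
  have jensen : Real.exp (∑ i, wt M lam i * (M.mulVec lam i - M.mulVec mu i)) ≤
      ∑ i, wt M lam i * Real.exp (M.mulVec lam i - M.mulVec mu i) := by
    have := convexOn_exp.map_sum_le (t := Finset.univ) (w := wt M lam)
      (p := fun i => M.mulVec lam i - M.mulVec mu i)
      (fun i _ => hw0 i) hw1 (fun i _ => Set.mem_univ _)
    simpa [smul_eq_mul] using this
  have hsum : ∑ i, wt M lam i * Real.exp (M.mulVec lam i - M.mulVec mu i)
      = expLoss M mu / expLoss M lam := by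
    have e1 : ∀ i : Fin m, wt M lam i * Real.exp (M.mulVec lam i - M.mulVec mu i)
        = Real.exp (-(M.mulVec mu i)) / (∑ i', Real.exp (-(M.mulVec lam i'))) := by
      intro i
      rw [wt, div_mul_eq_mul_div, ← Real.exp_add]
      congr 2
      ring
    rw [Finset.sum_congr rfl (fun i _ => e1 i), ← Finset.sum_div]
    rw [expLoss, expLoss, mul_div_mul_left _ _ (by positivity : (1:ℝ)/(m:ℝ) ≠ 0)]
  have hLlam : 0 < expLoss M lam := expLoss_pos M hm lam
  have hLmu : 0 < expLoss M mu := expLoss_pos M hm mu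
  have hlog : ∑ i, wt M lam i * (M.mulVec lam i - M.mulVec mu i) ≤
      Real.log (expLoss M mu) - Real.log (expLoss M lam) := by
    have h2 := Real.log_le_log (Real.exp_pos _) (le_of_le_of_eq jensen hsum)
    rwa [Real.log_exp, Real.log_div hLmu.ne' hLlam.ne'] at h2
  have hswap : ∑ i, wt M lam i * (M.mulVec mu i - M.mulVec lam i)
      = ∑ j, (mu - lam) j * (∑ i, wt M lam i * M i j) := by
    have e : ∀ i : Fin m, M.mulVec mu i - M.mulVec lam i = ∑ j, M i j * (mu - lam) j := by
      intro i
      rw [Matrix.mulVec, Matrix.mulVec, dotProduct, dotProduct,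
        ← Finset.sum_sub_distrib]
      apply Finset.sum_congr rfl
      intro j _
      simp [Pi.sub_apply]
      ring
    calc ∑ i, wt M lam i * (M.mulVec mu i - M.mulVec lam i)
        = ∑ i, ∑ j, wt M lam i * (M i j * (mu - lam) j) := by
          apply Finset.sum_congr rfl
          intro i _
          rw [e i, Finset.mul_sum]
      _ = ∑ j, ∑ i, wt M lam i * (M i j * (mu - lam) j) := Finset.sum_comm
      _ = ∑ j, (mu - lam) j * (∑ i, wt M lam i * M i j) := by
          apply Finset.sum_congr rfl
          intro j _
          rw [Finset.mul_sum]
          apply Finset.sum_congr rfl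
          intro i _
          ring
  have hbound : ∑ j, (mu - lam) j * (∑ i, wt M lam i * M i j) ≤ δ * l1 (mu - lam) := by
    rw [l1, Finset.mul_sum]
    apply Finset.sum_le_sum
    intro j _
    calc (mu - lam) j * (∑ i, wt M lam i * M i j)
        ≤ |(mu - lam) j * (∑ i, wt M lam i * M i j)| := le_abs_self _
      _ = |(mu - lam) j| * |∑ i, wt M lam i * M i j| := abs_mul _ _
      _ ≤ |(mu - lam) j| * δ := mul_le_mul_of_nonneg_left (hδ j) (abs_nonneg _)
      _ = δ * |(mu - lam) j| := mul_comm _ _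
  have : ∑ i, wt M lam i * (M.mulVec mu i - M.mulVec lam i) ≥
      Real.log (expLoss M lam) - Real.log (expLoss M mu) := by
    have : ∑ i, wt M lam i * (M.mulVec mu i - M.mulVec lam i)
        = -∑ i, wt M lam i * (M.mulVec lam i - M.mulVec mu i) := by
      rw [← Finset.sum_neg_distrib]
      apply Finset.sum_congr rfl
      intro i _
      ring
    rw [this]
    linarith
  linarith [hswap ▸ this, hbound]

end helpers

section sd

variable {m N : ℕ} (M : Matrix (Fin m) (Fin N) ℝ)

lemma Sdist_bddBelow (lamStar lam : Fin N → ℝ) :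
    BddBelow {d : ℝ | ∃ μ : Fin N → ℝ, expLoss M μ ≤ expLoss M lamStar ∧ d = l1 (μ - lam)} :=
  ⟨0, fun d ⟨μ, _, hd⟩ => hd ▸ l1_nonneg _⟩

lemma Sdist_mem (lamStar lam : Fin N → ℝ) :
    l1 (lamStar - lam) ∈
      {d : ℝ | ∃ μ : Fin N → ℝ, expLoss M μ ≤ expLoss M lamStar ∧ d = l1 (μ - lam)} :=
  ⟨lamStar, le_rfl, rfl⟩

lemma Sdist_nonneg (lamStar lam : Fin N → ℝ) : 0 ≤ Sdist M lamStar lam :=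
  le_csInf ⟨_, Sdist_mem M lamStar lam⟩ (fun d ⟨μ, _, hd⟩ => hd ▸ l1_nonneg _)

lemma Sdist_le_l1 (lamStar lam : Fin N → ℝ) : Sdist M lamStar lam ≤ l1 (lamStar - lam) :=
  csInf_le (Sdist_bddBelow M lamStar lam) (Sdist_mem M lamStar lam)

lemma Rlog_le_delta_Sdist (hm : 0 < m) (lamStar lam : Fin N → ℝ) (δ : ℝ)
    (hδ : ∀ j' : Fin N, |∑ i, wt M lam i * M i j'| ≤ δ) (hδ0 : 0 < δ) :
    Rlog M lamStar lam ≤ δ * Sdist M lamStar lam := by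
  have hlb : ∀ d ∈ {d : ℝ | ∃ μ : Fin N → ℝ,
      expLoss M μ ≤ expLoss M lamStar ∧ d = l1 (μ - lam)},
      Rlog M lamStar lam / δ ≤ d := by
    rintro d ⟨μ, hμ, hd⟩
    rw [div_le_iff₀ hδ0]
    have h1 := edge_bound M hm lam μ δ hδ
    have h2 := Real.log_le_log (expLoss_pos M hm μ) hμ
    rw [Rlog]
    subst hd
    linarith [mul_comm δ (l1 (μ - lam))]
  have h := le_csInf ⟨_, Sdist_mem M lamStar lam⟩ hlb
  rw [div_le_iff₀ hδ0] at h
  have h2 : Rlog M lamStar lam ≤ Sdist M lamStar lam * δ := h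
  linarith

lemma Sdist_step (lamStar lam : Fin N → ℝ) (j0 : Fin N) (a : ℝ) :
    Sdist M lamStar (lam + Pi.single j0 a) ≤ Sdist M lamStar lam + |a| := by
  have key : ∀ d ∈ {d : ℝ | ∃ μ : Fin N → ℝ,
      expLoss M μ ≤ expLoss M lamStar ∧ d = l1 (μ - lam)},
      Sdist M lamStar (lam + Pi.single j0 a) - |a| ≤ d := by
    rintro d ⟨μ, hμ, hd⟩
    have h1 : Sdist M lamStar (lam + Pi.single j0 a) ≤ l1 (μ - (lam + Pi.single j0 a)) :=
      csInf_le (Sdist_bddBelow M lamStar _) ⟨μ, hμ, rfl⟩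
    have h2 : l1 (μ - (lam + Pi.single j0 a)) ≤ l1 (μ - lam) + |a| := by
      have heq : μ - (lam + Pi.single j0 a) = (μ - lam) + (-(Pi.single j0 a)) := by
        funext x; simp; ring
      rw [heq]
      calc l1 ((μ - lam) + (-(Pi.single j0 a))) ≤ l1 (μ - lam) + l1 (-(Pi.single j0 a)) :=
            l1_add_le _ _
        _ = l1 (μ - lam) + |a| := by
            congr 1
            rw [l1_neg, l1_single]
    subst hd
    linarith
  have h := le_csInf ⟨_, Sdist_mem M lamStar lam⟩ key
  have h2 : Sdist M lamStar (lam + Pi.single j0 a) - |a| ≤ Sdist M lamStar lam := h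
  linarith

end sd

lemma abs_alpha {r : ℝ} (h : |r| < 1) :
    |(1/2 : ℝ) * Real.log ((1+r)/(1-r))| = (1/2) * Real.log ((1+|r|)/(1-|r|)) := by
  obtain ⟨h1, h2⟩ := abs_lt.1 h
  have hp : (0:ℝ) < 1 + r := by linarith
  have hm : (0:ℝ) < 1 - r := by linarith
  rcases le_or_gt 0 r with hr | hr
  · rw [abs_of_nonneg hr, abs_of_nonneg]
    apply mul_nonneg (by norm_num)
    apply Real.log_nonneg
    rw [le_div_iff₀ hm]; linarith
  · rw [abs_of_neg hr, abs_of_nonpos]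
    · rw [show (1 + -r)/(1 - -r) = ((1+r)/(1-r))⁻¹ by rw [inv_div]; ring_nf]
      rw [Real.log_inv]
      ring
    · apply mul_nonpos_of_nonneg_of_nonpos (by norm_num)
      apply Real.log_nonpos (by positivity)
      rw [div_le_one hm]; linarith


/-- If `R₀,…,R_t` and `S₀,…,S_t` are all strictly positive along the AdaBoost
trajectory, then `S_t ≤ B³·R_t^{−2}` where `B = ‖λ*‖₁`. -/
theorem adaboost_S_le_B3_Rinv2 {m N : ℕ} (hm : 0 < m)
    (M : Matrix (Fin m) (Fin N) ℝ) (hM : ∀ i j, |M i j| ≤ 1)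
    (lam : ℕ → Fin N → ℝ) (j : ℕ → Fin N) (r : ℕ → ℝ)
    (hAda : IsAdaBoost M lam j r)
    (hdrop : ∀ t : ℕ,
      expLoss M (lam (t + 1)) ≤ expLoss M (lam t) * Real.sqrt (1 - r t ^ 2))
    (lamStar : Fin N → ℝ) (t : ℕ)
    (hpos : ∀ s ≤ t, 0 < Rlog M lamStar (lam s) ∧ 0 < Sdist M lamStar (lam s)) :
    Sdist M lamStar (lam t) ≤ l1 lamStar ^ 3 / Rlog M lamStar (lam t) ^ 2 := by
  obtain ⟨hinit, hstep⟩ := hAda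
  -- loss is at most 1 along the trajectory
  have hmono : ∀ s, expLoss M (lam s) ≤ 1 := by
    intro s
    induction s with
    | zero => rw [hinit, expLoss_zero M hm]
    | succ n ih =>
      have h1 := hdrop n
      have h2 : Real.sqrt (1 - r n ^ 2) ≤ 1 :=
        Real.sqrt_le_one.2 (by nlinarith [sq_nonneg (r n)])
      calc expLoss M (lam (n+1)) ≤ expLoss M (lam n) * Real.sqrt (1 - r n ^ 2) := h1
        _ ≤ 1 * 1 := mul_le_mul ih h2 (Real.sqrt_nonneg _) zero_le_one
        _ = 1 := one_mul 1
  -- R is at most B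
  have hRB : ∀ s, Rlog M lamStar (lam s) ≤ l1 lamStar := by
    intro s
    have h1 : Real.log (expLoss M (lam s)) ≤ 0 :=
      Real.log_nonpos (expLoss_pos M hm _).le (hmono s)
    have h2 : -(l1 lamStar) ≤ Real.log (expLoss M lamStar) := by
      have := Real.log_le_log (Real.exp_pos _) (expLoss_ge M hm hM lamStar)
      rwa [Real.log_exp] at this
    rw [Rlog]; linarith
  -- edges are strictly less than one
  have hr2 : ∀ s, 0 < 1 - r s ^ 2 := by
    intro s
    by_contra hcon
    push_neg at hcon
    have h0 : Real.sqrt (1 - r s ^ 2) = 0 := Real.sqrt_eq_zero'.2 hcon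
    have := lt_of_lt_of_le (expLoss_pos M hm (lam (s+1))) (hdrop s)
    rw [h0, mul_zero] at this
    exact lt_irrefl 0 this
  have habs : ∀ s, |r s| < 1 := by
    intro s
    nlinarith [sq_abs (r s), abs_nonneg (r s), hr2 s]
  -- R step inequality
  have hRstep : ∀ s, Rlog M lamStar (lam (s+1)) ≤
      Rlog M lamStar (lam s) + (1/2) * Real.log (1 - r s ^ 2) := by
    intro s
    have hLpos := expLoss_pos M hm (lam s)
    have hsq : (0:ℝ) < Real.sqrt (1 - r s ^ 2) := Real.sqrt_pos.2 (hr2 s)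
    have h1 := Real.log_le_log (expLoss_pos M hm (lam (s+1))) (hdrop s)
    rw [Real.log_mul hLpos.ne' hsq.ne', Real.log_sqrt (hr2 s).le] at h1
    rw [Rlog, Rlog]
    linarith
  -- the invariant
  have main : ∀ s, s ≤ t →
      Rlog M lamStar (lam s) ^ 2 * Sdist M lamStar (lam s) ≤ l1 lamStar ^ 3 := by
    intro s
    induction s with
    | zero =>
      intro _
      obtain ⟨hR0, hS0⟩ := hpos 0 (Nat.zero_le t)
      have hSB : Sdist M lamStar (lam 0) ≤ l1 lamStar := by
        calc Sdist M lamStar (lam 0) ≤ l1 (lamStar - lam 0) := Sdist_le_l1 M lamStar (lam 0)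
          _ = l1 lamStar := by rw [hinit, sub_zero]
      have hRB0 := hRB 0
      have h1 : Rlog M lamStar (lam 0) ^ 2 ≤ l1 lamStar ^ 2 := by nlinarith
      calc Rlog M lamStar (lam 0) ^ 2 * Sdist M lamStar (lam 0)
          ≤ l1 lamStar ^ 2 * l1 lamStar := by nlinarith [sq_nonneg (Rlog M lamStar (lam 0))]
        _ = l1 lamStar ^ 3 := by ring
    | succ n ih =>
      intro hn
      have hn' : n ≤ t := Nat.le_of_succ_le hn
      obtain ⟨hRn, hSn⟩ := hpos n hn'
      obtain ⟨hRn', hSn'⟩ := hpos (n+1) hn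
      obtain ⟨hmax, hrdef, hupd⟩ := hstep n
      have hδb : ∀ j' : Fin N, |∑ i, wt M (lam n) i * M i j'| ≤ |r n| := by
        intro j'
        rw [hrdef]
        exact hmax j'
      have hδ0 : 0 < |r n| := by
        by_contra hcon
        push_neg at hcon
        have h1 := edge_bound M hm (lam n) lamStar (|r n|) hδb
        have h2 : |r n| * l1 (lamStar - lam n) ≤ 0 :=
          mul_nonpos_of_nonpos_of_nonneg hcon (l1_nonneg _)
        have h3 : Rlog M lamStar (lam n) ≤ 0 := by rw [Rlog]; linarith
        linarith
      have hRS := Rlog_le_delta_Sdist M hm lamStar (lam n) (|r n|) hδb hδ0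
      have hR' : Rlog M lamStar (lam (n+1)) ≤
          Rlog M lamStar (lam n) + (1/2) * Real.log (1 - |r n| ^ 2) := by
        rw [sq_abs]
        exact hRstep n
      have hS' : Sdist M lamStar (lam (n+1)) ≤
          Sdist M lamStar (lam n) + (1/2) * Real.log ((1 + |r n|)/(1 - |r n|)) := by
        rw [← abs_alpha (habs n)]
        rw [hupd]
        exact Sdist_step M lamStar (lam n) (j n) _
      exact key_step hδ0 (habs n) hRn hRS (ih hn') hRn' hR' (Sdist_nonneg M lamStar _) hS'
  -- conclude
  have hfin := main t le_rfl
  obtain ⟨hRt, _⟩ := hpos t le_rfl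
  rw [le_div_iff₀ (by positivity : (0:ℝ) < Rlog M lamStar (lam t) ^ 2)]
  linarith [mul_comm (Sdist M lamStar (lam t)) (Rlog M lamStar (lam t) ^ 2)]
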